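/- Let X be an infinite compact metric space and let h : X → X be a minimal homeomorphism. Then for every y ∈ X, every δ > 0, and all integers M ≤ N, there exists an open set U ⊆ X containing y such that the sets h^n(U), for M ≤ n ≤ N, are pairwise disjoint and each has diameter less than δ; consequently μ(U) ≤ 1/(N − M + 1) for every h-invariant Borel probability measure μ on X. -/

import Mathlib

open MeasureTheory

/-- Let `X` be an infinite compact metric space and `h : X → X` a
minimal homeomorphism. Then for every `y ∈ X`, every `δ > 0`, and all integers
`M ≤ N`, there is an open set `U ∋ y` such that the sets `h^n(U)`, `M ≤ n ≤ N`, are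
pairwise disjoint and each has diameter less than `δ`; consequently
`μ U ≤ 1/(N − M + 1)` for every `h`-invariant Borel probability measure `μ`. -/
theorem exists_small_disjoint_orbit_neighborhood
    {X : Type*} [MetricSpace X] [CompactSpace X] [Infinite X]
    [MeasurableSpace X] [BorelSpace X]
    (h : X ≃ₜ X)
    (hmin : ∀ x : X, Dense (Set.range fun n : ℤ => (h.toEquiv ^ n) x))
    (y : X) (δ : ℝ) (hδ : 0 < δ) (M N : ℤ) (hMN : M ≤ N) :
    ∃ U : Set X, IsOpen U ∧ y ∈ U ∧
      (∀ m n : ℤ, M ≤ m → m ≤ N → M ≤ n → n ≤ N → m ≠ n →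
        Disjoint (⇑(h.toEquiv ^ m) '' U) (⇑(h.toEquiv ^ n) '' U)) ∧
      (∀ n : ℤ, M ≤ n → n ≤ N → Metric.diam (⇑(h.toEquiv ^ n) '' U) < δ) ∧
      ∀ μ : Measure X, IsProbabilityMeasure μ →
        (∀ s : Set X, MeasurableSet s → μ (⇑h ⁻¹' s) = μ s) →
        μ U ≤ (((N - M + 1).toNat : ENNReal))⁻¹ := by
  classical
  set e := h.toEquiv with he
  -- continuity of all integer powers
  have hcont : ∀ n : ℤ, Continuous ⇑(e ^ n) := by
    intro n
    induction n using Int.induction_on with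
    | zero => simpa using continuous_id
    | succ n ih =>
        have h1 : (e ^ ((n : ℤ) + 1)) = e ^ (n : ℤ) * e := zpow_add_one e n
        have h2 : ⇑(e ^ (n : ℤ) * e) = ⇑(e ^ (n : ℤ)) ∘ ⇑e := rfl
        rw [h1, h2]
        exact ih.comp h.continuous
    | pred n ih =>
        have h1 : (e ^ (-(n : ℤ) - 1)) = e ^ (-(n : ℤ)) * e⁻¹ := zpow_sub_one e _
        have h2 : ⇑(e ^ (-(n : ℤ)) * e⁻¹) = ⇑(e ^ (-(n : ℤ))) ∘ ⇑e.symm := rfl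
        rw [h1, h2]
        exact ih.comp h.symm.continuous
  -- the orbit points are pairwise distinct (no periodic points)
  have hne : ∀ m n : ℤ, m ≠ n → (e ^ m) y ≠ (e ^ n) y := by
    intro m n hmn heq
    set k := m - n with hk
    have hk0 : k ≠ 0 := sub_ne_zero.mpr hmn
    have hfix : Function.IsFixedPt ⇑(e ^ k) y := by
      have h1 : (e ^ (-n)) ((e ^ m) y) = (e ^ (-n)) ((e ^ n) y) := congrArg _ heq
      have h2 : (e ^ (-n)) ((e ^ m) y) = (e ^ k) y := by
        rw [← Equiv.Perm.mul_apply, ← zpow_add, hk]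
        ring_nf
      have h3 : (e ^ (-n)) ((e ^ n) y) = y := by
        rw [← Equiv.Perm.mul_apply, ← zpow_add]
        simp
      rw [h2, h3] at h1
      exact h1
    have hkabs : (0:ℤ) < |k| := abs_pos.mpr hk0
    have hfixmul : ∀ c : ℤ, (e ^ (k * c)) y = y := by
      intro c
      rw [zpow_mul]
      exact hfix.perm_zpow c
    have hfixabs : ∀ c : ℤ, (e ^ (|k| * c)) y = y := by
      intro c
      rcases abs_choice k with hc | hc
      · rw [hc]; exact hfixmul c
      · rw [hc, neg_mul, ← mul_neg]; exact hfixmul (-c)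
    -- the orbit is finite
    have hfin : (Set.range fun j : ℤ => (e ^ j) y).Finite := by
      have hsub : (Set.range fun j : ℤ => (e ^ j) y) ⊆
          (fun j : ℤ => (e ^ j) y) '' (Set.Ico 0 |k|) := by
        rintro x ⟨j, rfl⟩
        refine ⟨j % |k|, ⟨Int.emod_nonneg j (ne_of_gt hkabs), Int.emod_lt_of_pos j hkabs⟩, ?_⟩
        have hj : j % |k| + |k| * (j / |k|) = j := by
          rw [add_comm]; exact Int.mul_ediv_add_emod j |k|
        calc (e ^ (j % |k|)) y = (e ^ (j % |k|)) ((e ^ (|k| * (j / |k|))) y) := by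
              rw [hfixabs]
          _ = (e ^ (j % |k| + |k| * (j / |k|))) y := by
              rw [← Equiv.Perm.mul_apply, ← zpow_add]
          _ = (e ^ j) y := by rw [hj]
      exact ((Set.finite_Ico 0 |k|).image _).subset hsub
    have hd := hmin y
    have hclosed : IsClosed (Set.range fun j : ℤ => (e ^ j) y) := hfin.isClosed
    have huniv : (Set.range fun j : ℤ => (e ^ j) y) = Set.univ := by
      rw [← hclosed.closure_eq]
      exact hd.closure_eq
    have : (Set.univ : Set X).Finite := huniv ▸ hfin
    exact Set.infinite_univ this
  set p : ℤ → X := fun n => (e ^ n) y with hp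
  set P : Finset (ℤ × ℤ) :=
    ((Finset.Icc M N) ×ˢ (Finset.Icc M N)).filter (fun q => q.1 ≠ q.2) with hP
  obtain ⟨ε, hε0, hεδ, hεsep⟩ : ∃ ε : ℝ, 0 < ε ∧ 2 * ε < δ ∧
      ∀ q ∈ P, 2 * ε ≤ dist (p q.1) (p q.2) := by
    by_cases hPne : P.Nonempty
    · set d := P.inf' hPne (fun q => dist (p q.1) (p q.2)) with hd
      have hd0 : 0 < d := by
        rw [hd, Finset.lt_inf'_iff]
        intro q hq
        have hq' := Finset.mem_filter.mp hq
        exact dist_pos.mpr (hne q.1 q.2 hq'.2)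
      refine ⟨min (δ / 3) (d / 2), ?_, ?_, ?_⟩
      · positivity
      · calc 2 * min (δ / 3) (d / 2) ≤ 2 * (δ / 3) := by
              have := min_le_left (δ / 3) (d / 2); linarith
          _ < δ := by linarith
      · intro q hq
        have h1 : 2 * min (δ / 3) (d / 2) ≤ 2 * (d / 2) := by
          have := min_le_right (δ / 3) (d / 2); linarith
        have h2 : d ≤ dist (p q.1) (p q.2) := Finset.inf'_le _ hq
        linarith
    · exact ⟨δ / 3, by positivity, by linarith,
        fun q hq => absurd ⟨q, hq⟩ hPne⟩
  set U : Set X := ⋂ n ∈ Finset.Icc M N, ⇑(e ^ n) ⁻¹' Metric.ball (p n) ε with hU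
  have hUopen : IsOpen U := by
    refine isOpen_biInter_finset fun n _ => ?_
    exact Metric.isOpen_ball.preimage (hcont n)
  have hyU : y ∈ U := by
    refine Set.mem_iInter₂.mpr fun n _ => ?_
    exact Metric.mem_ball_self hε0
  have himg : ∀ n ∈ Finset.Icc M N, ⇑(e ^ n) '' U ⊆ Metric.ball (p n) ε := by
    rintro n hn x ⟨u, hu, rfl⟩
    exact Set.mem_iInter₂.mp hu n hn
  refine ⟨U, hUopen, hyU, ?_, ?_, ?_⟩
  · intro m n hMm hmN hMn hnN hmn
    rw [Set.disjoint_left]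
    intro x hxm hxn
    have hm : m ∈ Finset.Icc M N := Finset.mem_Icc.mpr ⟨hMm, hmN⟩
    have hn' : n ∈ Finset.Icc M N := Finset.mem_Icc.mpr ⟨hMn, hnN⟩
    have h1 : dist x (p m) < ε := himg m hm hxm
    have h2 : dist x (p n) < ε := himg n hn' hxn
    have hsep : 2 * ε ≤ dist (p m) (p n) :=
      hεsep (m, n) (Finset.mem_filter.mpr ⟨Finset.mem_product.mpr ⟨hm, hn'⟩, hmn⟩)
    have := dist_triangle (p m) x (p n)
    rw [dist_comm (p m) x] at this
    linarith
  · intro n hMn hnN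
    have hn : n ∈ Finset.Icc M N := Finset.mem_Icc.mpr ⟨hMn, hnN⟩
    calc Metric.diam (⇑(e ^ n) '' U)
        ≤ Metric.diam (Metric.ball (p n) ε) :=
          Metric.diam_mono (himg n hn) Metric.isBounded_ball
      _ ≤ 2 * ε := Metric.diam_ball hε0.le
      _ < δ := hεδ
  · intro μ hμprob hμinv
    -- invariance under all integer powers
    have hinv : ∀ n : ℤ, ∀ s : Set X, MeasurableSet s → μ (⇑(e ^ n) ⁻¹' s) = μ s := by
      have hinv1 : ∀ s : Set X, MeasurableSet s → μ (⇑e ⁻¹' s) = μ s := hμinv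
      have hinvsymm : ∀ s : Set X, MeasurableSet s → μ (⇑e.symm ⁻¹' s) = μ s := by
        intro s hs
        have himage : ⇑e.symm ⁻¹' s = ⇑e '' s := by
          ext x
          simp [Equiv.symm_apply_eq, eq_comm, Set.mem_image, Equiv.eq_symm_apply]
        have hms : MeasurableSet (⇑e.symm ⁻¹' s) :=
          hs.preimage h.symm.continuous.measurable
        have hpre : ⇑e ⁻¹' (⇑e '' s) = s := Equiv.preimage_image e s
        calc μ (⇑e.symm ⁻¹' s) = μ (⇑e ⁻¹' (⇑e.symm ⁻¹' s)) :=
              (hinv1 _ hms).symm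
          _ = μ s := by rw [himage, hpre]
      intro n
      induction n using Int.induction_on with
      | zero => intro s _; simp
      | succ n ih =>
          intro s hs
          have h1 : (e ^ ((n : ℤ) + 1)) = e ^ (n : ℤ) * e := zpow_add_one e n
          have h2 : ⇑(e ^ ((n : ℤ) + 1)) ⁻¹' s = ⇑e ⁻¹' (⇑(e ^ (n : ℤ)) ⁻¹' s) := by
            rw [h1]; rfl
          rw [h2, hinv1 _ (hs.preimage (hcont n).measurable), ih s hs]
      | pred n ih =>
          intro s hs
          have h1 : (e ^ (-(n : ℤ) - 1)) = e ^ (-(n : ℤ)) * e⁻¹ := zpow_sub_one e _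
          have h2 : ⇑(e ^ (-(n : ℤ) - 1)) ⁻¹' s = ⇑e.symm ⁻¹' (⇑(e ^ (-(n : ℤ))) ⁻¹' s) := by
            rw [h1]; rfl
          rw [h2, hinvsymm _ (hs.preimage (hcont _).measurable), ih s hs]
    have hUmeas : MeasurableSet U := hUopen.measurableSet
    have himgmeas : ∀ n : ℤ, MeasurableSet (⇑(e ^ n) '' U) := by
      intro n
      have : ⇑(e ^ n) '' U = ⇑(e ^ n).symm ⁻¹' U := (Equiv.image_eq_preimage_symm _ _)
      rw [this]
      have hsymm : (e ^ n).symm = e ^ (-n) := by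
        rw [zpow_neg, Equiv.Perm.inv_def]
      rw [hsymm]
      exact hUmeas.preimage (hcont (-n)).measurable
    have himgμ : ∀ n : ℤ, μ (⇑(e ^ n) '' U) = μ U := by
      intro n
      have h1 : ⇑(e ^ n) '' U = ⇑(e ^ (-n)) ⁻¹' U := by
        rw [Equiv.image_eq_preimage_symm]
        congr 1
        rw [zpow_neg, Equiv.Perm.inv_def]
      rw [h1]
      exact hinv (-n) U hUmeas
    have hdisj : (↑(Finset.Icc M N) : Set ℤ).PairwiseDisjoint
        (fun n => ⇑(e ^ n) '' U) := by
      intro m hm n hn hmn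
      simp only [Finset.coe_Icc, Set.mem_Icc] at hm hn
      simp only [Function.onFun]
      rw [Set.disjoint_left]
      intro x hxm hxn
      have h1 : dist x (p m) < ε := himg m (Finset.mem_Icc.mpr hm) hxm
      have h2 : dist x (p n) < ε := himg n (Finset.mem_Icc.mpr hn) hxn
      have hsep : 2 * ε ≤ dist (p m) (p n) :=
        hεsep (m, n) (Finset.mem_filter.mpr
          ⟨Finset.mem_product.mpr ⟨Finset.mem_Icc.mpr hm, Finset.mem_Icc.mpr hn⟩, hmn⟩)
      have := dist_triangle (p m) x (p n)
      rw [dist_comm (p m) x] at this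
      linarith
    have hsum : ∑ n ∈ Finset.Icc M N, μ (⇑(e ^ n) '' U)
        = μ (⋃ n ∈ Finset.Icc M N, ⇑(e ^ n) '' U) :=
      (measure_biUnion_finset hdisj fun n _ => himgmeas n).symm
    have hcard : (Finset.Icc M N).card = (N - M + 1).toNat := by
      rw [Int.card_Icc]
      congr 1
      ring
    have hbound : ((N - M + 1).toNat : ENNReal) * μ U ≤ 1 := by
      calc ((N - M + 1).toNat : ENNReal) * μ U
          = ∑ _n ∈ Finset.Icc M N, μ U := by
            rw [Finset.sum_const, hcard, nsmul_eq_mul]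
        _ = ∑ n ∈ Finset.Icc M N, μ (⇑(e ^ n) '' U) := by
            exact Finset.sum_congr rfl fun n _ => (himgμ n).symm
        _ = μ (⋃ n ∈ Finset.Icc M N, ⇑(e ^ n) '' U) := hsum
        _ ≤ μ Set.univ := measure_mono (Set.subset_univ _)
        _ = 1 := measure_univ
    rw [ENNReal.le_inv_iff_mul_le, mul_comm]
    exact hbound
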